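/- arXiv:2407.10271 — 3 statements merged into one kernel-verified Lean document; each statement's English description precedes it below -/
import Mathlib

section
/- With the setup H = H_A ⊗ H_Ā, projection P_code, and the algebras M_A, M_Ā of logical operators reconstructible on A and Ā respectively: the code exhibits complementary recovery (i.e. there exists a von Neumann algebra M on H_code with M ⊆ M_A and M' ⊆ M_Ā) if and only if M_A' = M_Ā. Moreover, in this case M = M_A is the unique such algebra. -/
open Matrix Kronecker

variable {ιA ιB : Type*} [Fintype ιA] [Fintype ιB] [DecidableEq ιA] [DecidableEq ιB]

/-- The algebra `M_A` of logical operators reconstructible on `A`. -/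
def MA (P : Matrix (ιA × ιB) (ιA × ιB) ℂ) : Set (Matrix (ιA × ιB) (ιA × ιB) ℂ) :=
  {B | ∃ OA : Matrix ιA ιA ℂ,
    Commute (OA ⊗ₖ (1 : Matrix ιB ιB ℂ)) P ∧ B = P * (OA ⊗ₖ (1 : Matrix ιB ιB ℂ)) * P}

/-- The algebra `M_Ā` of logical operators reconstructible on `Ā`. -/
def MB (P : Matrix (ιA × ιB) (ιA × ιB) ℂ) : Set (Matrix (ιA × ιB) (ιA × ιB) ℂ) :=
  {B | ∃ OB : Matrix ιB ιB ℂ,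
    Commute ((1 : Matrix ιA ιA ℂ) ⊗ₖ OB) P ∧ B = P * ((1 : Matrix ιA ιA ℂ) ⊗ₖ OB) * P}

/-- The commutant of `M` within `L(H_code) = {B : B = P B P}`. -/
def cornerCommutant {n : Type*} [Fintype n]
    (P : Matrix n n ℂ) (M : Set (Matrix n n ℂ)) : Set (Matrix n n ℂ) :=
  {C | C = P * C * P ∧ ∀ B ∈ M, B * C = C * B}

/-- `S` is a von Neumann algebra on the code subspace `H_code = P H`. -/
def IsCodeVNA {n : Type*} [Fintype n]
    (P : Matrix n n ℂ) (S : Set (Matrix n n ℂ)) : Prop :=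
  (∀ B ∈ S, B = P * B * P) ∧ P ∈ S ∧
  (∀ a ∈ S, ∀ b ∈ S, a + b ∈ S) ∧ (∀ a ∈ S, ∀ b ∈ S, a * b ∈ S) ∧
  (∀ (c : ℂ), ∀ a ∈ S, c • a ∈ S) ∧ (∀ a ∈ S, star a ∈ S)


section DCTAux
set_option linter.unusedSectionVars false
variable {n : Type*} [Fintype n] [DecidableEq n]
lemma dct_single_vector (S : Set (Matrix n n ℂ))
    (h1 : (1 : Matrix n n ℂ) ∈ S)
    (hadd : ∀ a ∈ S, ∀ b ∈ S, a + b ∈ S)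
    (hmul : ∀ a ∈ S, ∀ b ∈ S, a * b ∈ S)
    (hsmul : ∀ (c : ℂ), ∀ a ∈ S, c • a ∈ S)
    (hstar : ∀ a ∈ S, star a ∈ S)
    (X : Matrix n n ℂ)
    (hX : ∀ Y : Matrix n n ℂ, (∀ a ∈ S, a * Y = Y * a) → X * Y = Y * X)
    (v : EuclideanSpace ℂ n) :
    ∃ a ∈ S, Matrix.toEuclideanCLM (𝕜 := ℂ) a v = Matrix.toEuclideanCLM (𝕜 := ℂ) X v := by
  set T := Matrix.toEuclideanCLM (𝕜 := ℂ) (n := n) with hT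
  set W : Submodule ℂ (EuclideanSpace ℂ n) := Submodule.span ℂ ((fun a => T a v) '' S) with hW
  have hgen : ∀ a ∈ S, T a v ∈ W := fun a ha =>
    Submodule.subset_span ⟨a, ha, rfl⟩
  have hinv : ∀ a ∈ S, ∀ w ∈ W, T a w ∈ W := by
    intro a ha w hw
    induction hw using Submodule.span_induction with
    | mem x hx =>
      obtain ⟨b, hb, rfl⟩ := hx
      have : T a (T b v) = T (a * b) v := by rw [_root_.map_mul]; rfl
      rw [this]; exact hgen _ (hmul a ha b hb)
    | zero => simp only [map_zero]; exact W.zero_mem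
    | add x y _ _ hx hy => rw [_root_.map_add]; exact W.add_mem hx hy
    | smul c x _ hx => rw [_root_.map_smul]; exact W.smul_mem c hx
  set E : EuclideanSpace ℂ n →L[ℂ] EuclideanSpace ℂ n :=
    W.subtypeL.comp (W.orthogonalProjectionOnto) with hE
  have hEval : ∀ x, E x = (W.orthogonalProjectionOnto x : EuclideanSpace ℂ n) := fun x => rfl
  have hEmem : ∀ w ∈ W, E w = w := by
    intro w hw; rw [hEval]; exact Submodule.starProjection_eq_self_iff.2 hw
  have hEorth : ∀ u ∈ Wᗮ, E u = 0 := by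
    intro u hu; rw [hEval, Submodule.orthogonalProjectionOnto_apply_of_mem_orthogonal hu]
    rfl
  have hEW : ∀ x, E x ∈ W := fun x => by rw [hEval]; exact SetLike.coe_mem _
  have hsub : ∀ x, x - E x ∈ Wᗮ := fun x => by
    rw [hEval]; exact Submodule.sub_starProjection_mem_orthogonal x
  -- T a commutes with E for a ∈ S
  have hcomm : ∀ a ∈ S, (T a) * E = E * (T a) := by
    intro a ha
    refine ContinuousLinearMap.ext fun x => ?_
    have horth : T a (x - E x) ∈ Wᗮ := by
      rw [Submodule.mem_orthogonal]
      intro w hw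
      have h1 : (inner ℂ (T (star a) w) (x - E x) : ℂ) = 0 :=
        (Submodule.mem_orthogonal _ _).1 (hsub x) _ (hinv _ (hstar a ha) w hw)
      have h2 : T (star a) = ContinuousLinearMap.adjoint (T a) := by
        rw [map_star, ContinuousLinearMap.star_eq_adjoint]
      rw [h2, ContinuousLinearMap.adjoint_inner_left] at h1
      exact h1
    have hdecomp : T a x = T a (E x) + T a (x - E x) := by
      rw [← _root_.map_add]; congr 1; abel
    calc (T a * E) x = T a (E x) := rfl
      _ = E (T a (E x)) + E (T a (x - E x)) := by
          rw [hEmem _ (hinv a ha _ (hEW x)), hEorth _ horth, add_zero]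
      _ = E (T a x) := by rw [← _root_.map_add, ← hdecomp]
      _ = (E * T a) x := rfl
  -- pull E back to a matrix in the commutant of S
  set Y : Matrix n n ℂ := T.symm E with hY
  have hTY : T Y = E := T.apply_symm_apply E
  have hYcomm : ∀ a ∈ S, a * Y = Y * a := by
    intro a ha
    have h1 : a * Y = T.symm (T a * E) := by
      rw [_root_.map_mul, T.symm_apply_apply, hY]
    have h2 : Y * a = T.symm (E * T a) := by
      rw [_root_.map_mul, T.symm_apply_apply, hY]
    rw [h1, h2, hcomm a ha]
  have hXY : (T X) * E = E * (T X) := by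
    have h := congrArg T (hX Y hYcomm)
    rwa [_root_.map_mul, _root_.map_mul, hTY] at h
  have hvW : v ∈ W := by
    have := hgen 1 h1
    rwa [_root_.map_one, ContinuousLinearMap.one_apply] at this
  have hXvW : T X v ∈ W := by
    have : T X v = E (T X v) := by
      conv_lhs => rw [← hEmem v hvW]
      have h := ContinuousLinearMap.ext_iff.1 hXY v
      simpa [ContinuousLinearMap.mul_apply] using h
    rw [this]; exact hEW _
  -- every element of W has the form T a v with a ∈ S
  have hform : ∀ w ∈ W, ∃ a ∈ S, T a v = w := by
    intro w hw
    induction hw using Submodule.span_induction with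
    | mem x hx => obtain ⟨b, hb, rfl⟩ := hx; exact ⟨b, hb, rfl⟩
    | zero =>
      refine ⟨0, by simpa using hsmul 0 1 h1, by simp⟩
    | add x y _ _ hx hy =>
      obtain ⟨a, ha, rfl⟩ := hx; obtain ⟨b, hb, rfl⟩ := hy
      exact ⟨a + b, hadd a ha b hb, by rw [_root_.map_add]; rfl⟩
    | smul c x _ hx =>
      obtain ⟨a, ha, rfl⟩ := hx
      exact ⟨c • a, hsmul c a ha, by rw [_root_.map_smul]; rfl⟩
  obtain ⟨a, ha, hav⟩ := hform _ hXvW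
  exact ⟨a, ha, hav⟩


lemma kron_mul_apply (a : Matrix n n ℂ) (Y : Matrix (n × n) (n × n) ℂ) (i k j l : n) :
    ((a ⊗ₖ (1 : Matrix n n ℂ)) * Y) (i, k) (j, l) = ∑ p, a i p * Y (p, k) (j, l) := by
  rw [Matrix.mul_apply, Fintype.sum_prod_type]
  simp [Matrix.one_apply, mul_ite, ite_mul, mul_comm]

lemma mul_kron_apply (a : Matrix n n ℂ) (Y : Matrix (n × n) (n × n) ℂ) (i k j l : n) :
    (Y * (a ⊗ₖ (1 : Matrix n n ℂ))) (i, k) (j, l) = ∑ p, Y (i, k) (p, l) * a p j := by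
  rw [Matrix.mul_apply, Fintype.sum_prod_type]
  simp only [Matrix.kroneckerMap_apply, Matrix.one_apply, mul_ite, mul_one, mul_zero]
  rw [Finset.sum_comm]
  simp [Finset.sum_ite_eq', mul_comm]

lemma kron_mulVec_diag (b : Matrix n n ℂ) (i k : n) :
    ((b ⊗ₖ (1 : Matrix n n ℂ)) *ᵥ (fun p : n × n => if p.1 = p.2 then 1 else 0)) (i, k)
      = b i k := by
  rw [Matrix.mulVec, dotProduct, Fintype.sum_prod_type]
  simp [Matrix.one_apply, mul_ite, ite_mul]

lemma kron_one_conjTranspose {m l : Type*} [DecidableEq l] (a : Matrix m m ℂ) :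
    (a ⊗ₖ (1 : Matrix l l ℂ))ᴴ = aᴴ ⊗ₖ (1 : Matrix l l ℂ) := by
  ext ⟨i, k⟩ ⟨j, l⟩
  simp only [Matrix.conjTranspose_apply, Matrix.kroneckerMap_apply, Matrix.one_apply]
  rcases eq_or_ne l k with h | h
  · subst h; simp
  · simp [h, Ne.symm h]

lemma matrix_dct (S : Set (Matrix n n ℂ))
    (h1 : (1 : Matrix n n ℂ) ∈ S)
    (hadd : ∀ a ∈ S, ∀ b ∈ S, a + b ∈ S)
    (hmul : ∀ a ∈ S, ∀ b ∈ S, a * b ∈ S)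
    (hsmul : ∀ (c : ℂ), ∀ a ∈ S, c • a ∈ S)
    (hstar : ∀ a ∈ S, star a ∈ S)
    (X : Matrix n n ℂ)
    (hX : ∀ Y : Matrix n n ℂ, (∀ a ∈ S, a * Y = Y * a) → X * Y = Y * X) :
    X ∈ S := by
  classical
  set S2 : Set (Matrix (n × n) (n × n) ℂ) :=
    (fun a : Matrix n n ℂ => a ⊗ₖ (1 : Matrix n n ℂ)) '' S with hS2
  have h1' : (1 : Matrix (n × n) (n × n) ℂ) ∈ S2 :=
    ⟨1, h1, Matrix.one_kronecker_one⟩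
  have hadd' : ∀ a ∈ S2, ∀ b ∈ S2, a + b ∈ S2 := by
    rintro _ ⟨a, ha, rfl⟩ _ ⟨b, hb, rfl⟩
    exact ⟨a + b, hadd a ha b hb, Matrix.add_kronecker a b 1⟩
  have hmul' : ∀ a ∈ S2, ∀ b ∈ S2, a * b ∈ S2 := by
    rintro _ ⟨a, ha, rfl⟩ _ ⟨b, hb, rfl⟩
    exact ⟨a * b, hmul a ha b hb, by rw [← Matrix.mul_kronecker_mul, one_mul]⟩
  have hsmul' : ∀ (c : ℂ), ∀ a ∈ S2, c • a ∈ S2 := by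
    rintro c _ ⟨a, ha, rfl⟩
    exact ⟨c • a, hsmul c a ha, Matrix.smul_kronecker c a 1⟩
  have hstar' : ∀ a ∈ S2, star a ∈ S2 := by
    rintro _ ⟨a, ha, rfl⟩
    exact ⟨star a, hstar a ha, (kron_one_conjTranspose a).symm⟩
  have hX2 : ∀ Y : Matrix (n × n) (n × n) ℂ,
      (∀ s ∈ S2, s * Y = Y * s) → (X ⊗ₖ (1 : Matrix n n ℂ)) * Y = Y * (X ⊗ₖ 1) := by
    intro Y hY
    set Yb : n → n → Matrix n n ℂ := fun k l => Matrix.of fun i j => Y (i, k) (j, l) with hYb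
    have hblock : ∀ k l, ∀ a ∈ S, a * Yb k l = Yb k l * a := by
      intro k l a ha
      ext i j
      have h := hY _ ⟨a, ha, rfl⟩
      have h' := congrFun (congrFun h (i, k)) (j, l)
      rw [kron_mul_apply, mul_kron_apply] at h'
      simpa [Matrix.mul_apply, hYb] using h'
    have hXb : ∀ k l, X * Yb k l = Yb k l * X := fun k l => hX _ (hblock k l)
    ext ⟨i, k⟩ ⟨j, l⟩
    rw [kron_mul_apply, mul_kron_apply]
    have h' := congrFun (congrFun (hXb k l) i) j
    simpa [Matrix.mul_apply, hYb] using h'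
  obtain ⟨s, hs, heq⟩ := dct_single_vector S2 h1' hadd' hmul' hsmul' hstar'
    (X ⊗ₖ (1 : Matrix n n ℂ)) hX2
    ((WithLp.equiv 2 _).symm (fun p : n × n => if p.1 = p.2 then 1 else 0))
  obtain ⟨a, ha, rfl⟩ := hs
  suffices hax : a = X by rwa [hax] at ha
  ext i k
  have heq' := congrArg (WithLp.equiv 2 ((n × n) → ℂ)) heq
  simp only [WithLp.equiv_symm_apply, Matrix.toEuclideanCLM_toLp] at heq'
  simp only [WithLp.equiv, Equiv.coe_fn_mk, WithLp.ofLp_toLp] at heq'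
  have := congrFun heq' (i, k)
  rwa [kron_mulVec_diag, kron_mulVec_diag] at this


lemma pop_collapse (P O : Matrix n n ℂ) (hP : P * P = P) (hO : O * P = P * O) :
    P * O * P = P * O := by
  rw [Matrix.mul_assoc, hO, ← Matrix.mul_assoc, hP]

lemma pop_collapse' (P O : Matrix n n ℂ) (hP : P * P = P) (hO : O * P = P * O) :
    P * O * P = O * P := by
  rw [pop_collapse P O hP hO, hO]

lemma mul_commP (P OA OB : Matrix n n ℂ)
    (hA : OA * P = P * OA) (hB : OB * P = P * OB) :
    (OA * OB) * P = P * (OA * OB) := by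
  rw [Matrix.mul_assoc, hB, ← Matrix.mul_assoc, hA, Matrix.mul_assoc]

lemma corner_mul_collapse (P OA OB : Matrix n n ℂ) (hP : P * P = P)
    (hA : OA * P = P * OA) (hB : OB * P = P * OB) :
    (P * OA * P) * (P * OB * P) = P * (OA * OB) * P := by
  rw [pop_collapse' P OA hP hA, pop_collapse P OB hP hB,
    pop_collapse P (OA * OB) hP (mul_commP P OA OB hA hB)]
  calc (OA * P) * (P * OB) = OA * (P * (P * OB)) := by rw [Matrix.mul_assoc]
    _ = OA * ((P * P) * OB) := by rw [Matrix.mul_assoc]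
    _ = OA * (P * OB) := by rw [hP]
    _ = (OA * P) * OB := by rw [Matrix.mul_assoc]
    _ = (P * OA) * OB := by rw [hA]
    _ = P * (OA * OB) := by rw [Matrix.mul_assoc]

lemma corner_idem (P O : Matrix n n ℂ) (hP : P * P = P) :
    P * (P * O * P) * P = P * O * P := by
  rw [← Matrix.mul_assoc P (P * O) P, ← Matrix.mul_assoc P P O, hP,
    Matrix.mul_assoc (P * O) P P, hP]

lemma kron_commute {ιA ιB : Type*} [Fintype ιA] [Fintype ιB] [DecidableEq ιA] [DecidableEq ιB]
    (OA : Matrix ιA ιA ℂ) (OB : Matrix ιB ιB ℂ) :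
    (OA ⊗ₖ (1 : Matrix ιB ιB ℂ)) * ((1 : Matrix ιA ιA ℂ) ⊗ₖ OB)
      = ((1 : Matrix ιA ιA ℂ) ⊗ₖ OB) * (OA ⊗ₖ (1 : Matrix ιB ιB ℂ)) := by
  rw [← Matrix.mul_kronecker_mul, ← Matrix.mul_kronecker_mul, one_mul, mul_one,
    one_mul, mul_one]

lemma fix_left_right (P : Matrix n n ℂ) (hP : P * P = P) (Z : Matrix n n ℂ)
    (hZ : Z = P * Z * P) : Z * P = Z ∧ P * Z = Z := by
  constructor
  · conv_lhs => rw [hZ]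
    rw [Matrix.mul_assoc (P * Z) P P, hP]; exact hZ.symm
  · conv_lhs => rw [hZ]
    rw [← Matrix.mul_assoc P (P * Z) P, ← Matrix.mul_assoc P P Z, hP]; exact hZ.symm

lemma corner_dct (P : Matrix n n ℂ) (hP : P * P = P) (hPsa : IsSelfAdjoint P)
    (M : Set (Matrix n n ℂ)) (hM : IsCodeVNA P M) :
    cornerCommutant P (cornerCommutant P M) ⊆ M := by
  obtain ⟨hcode, hPmem, hadd, hmul, hsmul, hstar⟩ := hM
  intro A hA
  obtain ⟨hAPAP, hAcomm⟩ := hA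
  have hAfix := fix_left_right P hP A hAPAP
  set S : Set (Matrix n n ℂ) :=
    {x | ∃ B ∈ M, ∃ c : ℂ, x = B + c • (1 - P)} with hS
  have h1 : (1 : Matrix n n ℂ) ∈ S := ⟨P, hPmem, 1, by simp⟩
  have hadd' : ∀ a ∈ S, ∀ b ∈ S, a + b ∈ S := by
    rintro _ ⟨B, hB, c, rfl⟩ _ ⟨B', hB', c', rfl⟩
    exact ⟨B + B', hadd B hB B' hB', c + c', by rw [add_smul]; abel⟩
  have hsmul' : ∀ (c : ℂ), ∀ a ∈ S, c • a ∈ S := by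
    rintro c _ ⟨B, hB, c', rfl⟩
    exact ⟨c • B, hsmul c B hB, c * c', by rw [smul_add, smul_smul]⟩
  have hstar' : ∀ a ∈ S, star a ∈ S := by
    rintro _ ⟨B, hB, c, rfl⟩
    refine ⟨star B, hstar B hB, star c, ?_⟩
    rw [star_add, star_smul, star_sub, star_one, hPsa.star_eq]
  have hmul' : ∀ a ∈ S, ∀ b ∈ S, a * b ∈ S := by
    rintro _ ⟨B, hB, c, rfl⟩ _ ⟨B', hB', c', rfl⟩
    have hBfix := fix_left_right P hP B (hcode B hB)
    have hBfix' := fix_left_right P hP B' (hcode B' hB')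
    refine ⟨B * B', hmul B hB B' hB', c * c', ?_⟩
    have e1 : B * (1 - P) = 0 := by rw [Matrix.mul_sub, Matrix.mul_one, hBfix.1, sub_self]
    have e2 : (1 - P) * B' = 0 := by rw [Matrix.sub_mul, Matrix.one_mul, hBfix'.2, sub_self]
    have e3 : (1 - P) * (1 - P) = 1 - P := by
      rw [Matrix.sub_mul, Matrix.one_mul, Matrix.mul_sub, Matrix.mul_one, hP]; abel
    simp only [add_mul, mul_add, smul_mul_assoc, mul_smul_comm, e1, e2, e3, smul_smul,
      smul_zero, add_zero, zero_add, mul_zero, zero_mul, mul_comm c' c]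
  have hX : ∀ Y : Matrix n n ℂ, (∀ a ∈ S, a * Y = Y * a) → A * Y = Y * A := by
    intro Y hY
    have hYM : ∀ B ∈ M, B * Y = Y * B := by
      intro B hB
      have := hY B ⟨B, hB, 0, by simp⟩
      exact this
    have hYP : P * Y = Y * P := hYM P hPmem
    set C : Matrix n n ℂ := P * Y * P with hC
    have hCmem : C ∈ cornerCommutant P M := by
      constructor
      · rw [hC]
        rw [← Matrix.mul_assoc P (P * Y) P, ← Matrix.mul_assoc P P Y, hP,
          Matrix.mul_assoc (P * Y) P P, hP]
      · intro B hB
        have hBfix := fix_left_right P hP B (hcode B hB)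
        calc B * (P * Y * P) = ((B * P) * Y) * P := by
              rw [← Matrix.mul_assoc B (P * Y) P, ← Matrix.mul_assoc B P Y]
          _ = (B * Y) * P := by rw [hBfix.1]
          _ = (Y * B) * P := by rw [hYM B hB]
          _ = Y * B := by rw [Matrix.mul_assoc, hBfix.1]
          _ = B * Y := (hYM B hB).symm
          _ = (P * B) * Y := by rw [hBfix.2]
          _ = P * (B * Y) := by rw [Matrix.mul_assoc]
          _ = P * (Y * B) := by rw [hYM B hB]
          _ = (P * Y) * B := by rw [← Matrix.mul_assoc]
          _ = ((P * Y) * P) * B := by rw [Matrix.mul_assoc (P * Y) P B, hBfix.2]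
    have hCA : C * A = A * C := hAcomm C hCmem
    have e1 : A * Y = (A * Y) * P := by
      conv_lhs => rw [← hAfix.1]
      rw [Matrix.mul_assoc A P Y, hYP, ← Matrix.mul_assoc]
    have e2 : A * C = (A * Y) * P := by
      rw [hC, ← Matrix.mul_assoc A (P * Y) P, ← Matrix.mul_assoc A P Y, hAfix.1]
    have e3 : Y * A = P * (Y * A) := by
      conv_lhs => rw [← hAfix.2]
      rw [← Matrix.mul_assoc Y P A, ← hYP, Matrix.mul_assoc]
    have e4 : C * A = P * (Y * A) := by
      rw [hC, Matrix.mul_assoc (P * Y) P A, hAfix.2, Matrix.mul_assoc]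
    rw [e1, ← e2, ← hCA, e4, ← e3]
  obtain ⟨B, hB, c, hBc⟩ := matrix_dct S h1 hadd' hmul' hsmul' hstar' A hX
  have : A = B := by
    have h0 : P * (1 - P) * P = 0 := by
      rw [Matrix.mul_sub, Matrix.mul_one, hP, sub_self, Matrix.zero_mul]
    calc A = P * A * P := hAPAP
      _ = P * (B + c • (1 - P)) * P := by rw [← hBc]
      _ = P * B * P + c • (P * (1 - P) * P) := by
          rw [Matrix.mul_add, Matrix.add_mul, mul_smul_comm, smul_mul_assoc]
      _ = B := by rw [← hcode B hB, h0, smul_zero, add_zero]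
  rwa [this]

end DCTAux

set_option linter.unusedSectionVars false in
lemma commute_star {n : Type*} [Fintype n] {P O : Matrix n n ℂ} (hPsa : IsSelfAdjoint P)
    (h : O * P = P * O) : star O * P = P * star O := by
  have := congrArg star h
  rw [StarMul.star_mul, StarMul.star_mul, hPsa.star_eq] at this
  exact this.symm

lemma MA_isCodeVNA (P : Matrix (ιA × ιB) (ιA × ιB) ℂ) (hP : P * P = P)
    (hPsa : IsSelfAdjoint P) : IsCodeVNA P (MA P) := by
  refine ⟨?_, ?_, ?_, ?_, ?_, ?_⟩
  · rintro _ ⟨OA, hOA, rfl⟩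
    exact (corner_idem P _ hP).symm
  · refine ⟨1, ?_, ?_⟩
    · rw [Matrix.one_kronecker_one]; exact Commute.one_left P
    · rw [Matrix.one_kronecker_one, Matrix.mul_one, hP]
  · rintro _ ⟨OA, hOA, rfl⟩ _ ⟨OA', hOA', rfl⟩
    refine ⟨OA + OA', ?_, ?_⟩
    · rw [Matrix.add_kronecker]; exact hOA.add_left hOA'
    · rw [Matrix.add_kronecker, Matrix.mul_add, Matrix.add_mul]
  · rintro _ ⟨OA, hOA, rfl⟩ _ ⟨OA', hOA', rfl⟩
    have hk : (OA * OA') ⊗ₖ (1 : Matrix ιB ιB ℂ)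
        = (OA ⊗ₖ (1 : Matrix ιB ιB ℂ)) * (OA' ⊗ₖ (1 : Matrix ιB ιB ℂ)) := by
      rw [← Matrix.mul_kronecker_mul, one_mul]
    refine ⟨OA * OA', ?_, ?_⟩
    · rw [hk]; exact hOA.mul_left hOA'
    · rw [hk]; exact corner_mul_collapse P _ _ hP hOA.eq hOA'.eq
  · rintro c _ ⟨OA, hOA, rfl⟩
    refine ⟨c • OA, ?_, ?_⟩
    · rw [Matrix.smul_kronecker]
      unfold Commute SemiconjBy
      rw [smul_mul_assoc, mul_smul_comm, hOA.eq]
    · rw [Matrix.smul_kronecker, mul_smul_comm, smul_mul_assoc]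
  · rintro _ ⟨OA, hOA, rfl⟩
    have hstar_kron : star (OA ⊗ₖ (1 : Matrix ιB ιB ℂ)) = OAᴴ ⊗ₖ (1 : Matrix ιB ιB ℂ) := by
      rw [Matrix.star_eq_conjTranspose, kron_one_conjTranspose]
    refine ⟨OAᴴ, ?_, ?_⟩
    · have h := commute_star hPsa hOA.eq
      rw [hstar_kron] at h
      exact h
    · rw [StarMul.star_mul, StarMul.star_mul, hPsa.star_eq, hstar_kron, ← Matrix.mul_assoc]

lemma MB_subset_comm (P : Matrix (ιA × ιB) (ιA × ιB) ℂ) (hP : P * P = P) :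
    MB P ⊆ cornerCommutant P (MA P) := by
  rintro _ ⟨OB, hOB, rfl⟩
  constructor
  · exact (corner_idem P _ hP).symm
  · rintro _ ⟨OA, hOA, rfl⟩
    rw [corner_mul_collapse P _ _ hP hOA.eq hOB.eq,
      corner_mul_collapse P _ _ hP hOB.eq hOA.eq, kron_commute]

lemma MA_subset_comm (P : Matrix (ιA × ιB) (ιA × ιB) ℂ) (hP : P * P = P) :
    MA P ⊆ cornerCommutant P (MB P) := by
  rintro _ ⟨OA, hOA, rfl⟩
  constructor
  · exact (corner_idem P _ hP).symm
  · rintro _ ⟨OB, hOB, rfl⟩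
    rw [corner_mul_collapse P _ _ hP hOB.eq hOA.eq,
      corner_mul_collapse P _ _ hP hOA.eq hOB.eq, kron_commute]

lemma comm_antitone {n : Type*} [Fintype n] (P : Matrix n n ℂ)
    {M₁ M₂ : Set (Matrix n n ℂ)} (h : M₁ ⊆ M₂) :
    cornerCommutant P M₂ ⊆ cornerCommutant P M₁ :=
  fun _ hC => ⟨hC.1, fun B hB => hC.2 B (h hB)⟩



/-- **Criterion 1 of complementary recovery.** The code exhibits
complementary recovery — there exists a von Neumann algebra `M` on `H_code` with
`M ⊆ M_A` and `M' ⊆ M_Ā` — if and only if `M_A' = M_Ā`; moreover `M = M_A` is the unique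
such algebra. -/
theorem complementary_recovery_criterion_one (P : Matrix (ιA × ιB) (ιA × ιB) ℂ)
    (hP : P * P = P) (hPsa : IsSelfAdjoint P) :
    ((∃ M : Set (Matrix (ιA × ιB) (ιA × ιB) ℂ),
        IsCodeVNA P M ∧ M ⊆ MA P ∧ cornerCommutant P M ⊆ MB P) ↔
      cornerCommutant P (MA P) = MB P) ∧
    (∀ M : Set (Matrix (ιA × ιB) (ιA × ιB) ℂ),
      IsCodeVNA P M → M ⊆ MA P → cornerCommutant P M ⊆ MB P → M = MA P) := by
  constructor
  · constructor
    · rintro ⟨M, hM, hMA, hMB⟩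
      apply Set.Subset.antisymm
      · exact (comm_antitone P hMA).trans hMB
      · exact MB_subset_comm P hP
    · intro h
      exact ⟨MA P, MA_isCodeVNA P hP hPsa, Set.Subset.rfl, h.le⟩
  · intro M hM hMA hMB
    apply Set.Subset.antisymm hMA
    intro A hA
    have h1 : A ∈ cornerCommutant P (MB P) := MA_subset_comm P hP hA
    have h2 : A ∈ cornerCommutant P (cornerCommutant P M) :=
      comm_antitone P hMB h1
    exact corner_dct P hP hPsa M hM h2
end

section
/- With H = H_A ⊗ H_Ā and projection P_code: the commutant M_A' (within L(H_code)) is the smallest von Neumann algebra on H_code containing all operators of the form P_code (1 ⊗ O_Ā) P_code, where O_Ā ranges over all operators on H_Ā (not necessarily commuting with P_code). -/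
open Matrix Kronecker

variable {ιA ιB : Type*} [Fintype ιA] [Fintype ιB] [DecidableEq ιA] [DecidableEq ιB]

section DC
variable {n : Type*} [Fintype n] [DecidableEq n]

lemma orbit_lemma (S : Set (Matrix n n ℂ))
    (h1 : (1 : Matrix n n ℂ) ∈ S)
    (hadd : ∀ a ∈ S, ∀ b ∈ S, a + b ∈ S)
    (hmul : ∀ a ∈ S, ∀ b ∈ S, a * b ∈ S)
    (hsmul : ∀ (c : ℂ), ∀ a ∈ S, c • a ∈ S)
    (hstar : ∀ a ∈ S, star a ∈ S)
    (C : Matrix n n ℂ)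
    (hC : ∀ y, (∀ b ∈ S, b * y = y * b) → C * y = y * C)
    (v : EuclideanSpace ℂ n) :
    ∃ b ∈ S, Matrix.toEuclideanCLM (n := n) (𝕜 := ℂ) C v
      = Matrix.toEuclideanCLM (n := n) (𝕜 := ℂ) b v := by
  classical
  set T := Matrix.toEuclideanCLM (n := n) (𝕜 := ℂ) with hT
  have h0 : (0 : Matrix n n ℂ) ∈ S := by simpa using hsmul 0 1 h1
  let W : Submodule ℂ (EuclideanSpace ℂ n) :=
  { carrier := {w | ∃ b ∈ S, w = T b v}
    add_mem' := by
      rintro _ _ ⟨a, ha, rfl⟩ ⟨b, hb, rfl⟩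
      exact ⟨a + b, hadd a ha b hb, by simp⟩
    zero_mem' := ⟨0, h0, by simp⟩
    smul_mem' := by
      rintro c _ ⟨a, ha, rfl⟩
      exact ⟨c • a, hsmul c a ha, by simp⟩ }
  have hmemW : ∀ x, x ∈ W ↔ ∃ b ∈ S, x = T b v := fun x => Iff.rfl
  have hWinv : ∀ b ∈ S, ∀ w ∈ W, T b w ∈ W := by
    rintro b hb _ ⟨a, ha, rfl⟩
    refine ⟨b * a, hmul b hb a ha, ?_⟩
    rw [_root_.map_mul]
    rfl
  have hWperp : ∀ b ∈ S, ∀ u ∈ Wᗮ, T b u ∈ Wᗮ := by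
    intro b hb u hu
    rw [Submodule.mem_orthogonal]
    intro w hw
    have hadj : T b = ContinuousLinearMap.adjoint (T (star b)) := by
      rw [map_star, ← ContinuousLinearMap.star_eq_adjoint, star_star]
    rw [hadj, ContinuousLinearMap.adjoint_inner_right]
    exact (Submodule.mem_orthogonal W u).mp hu _ (hWinv (star b) (hstar b hb) w hw)
  set pr : EuclideanSpace ℂ n →L[ℂ] EuclideanSpace ℂ n :=
    W.subtypeL.comp (W.orthogonalProjectionOnto) with hpr
  have hprW : ∀ x, pr x ∈ W := fun x => (W.orthogonalProjectionOnto x).2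
  have hprself : ∀ x ∈ W, pr x = x := by
    intro x hx
    exact W.starProjection_eq_self_iff.mpr hx
  have hcomm : ∀ b ∈ S, T b * pr = pr * T b := by
    intro b hb
    refine ContinuousLinearMap.ext fun x => ?_
    have hdec : T b x = T b (pr x) + T b (x - pr x) := by
      rw [← map_add]
      congr 1
      abel
    have h1' : pr (T b (pr x)) = T b (pr x) := hprself _ (hWinv b hb _ (hprW x))
    have h2' : pr (T b (x - pr x)) = 0 := by
      have : T b (x - pr x) ∈ Wᗮ :=
        hWperp b hb _ (W.sub_starProjection_mem_orthogonal x)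
      show (W.subtypeL (W.orthogonalProjectionOnto _)) = 0
      rw [Submodule.orthogonalProjectionOnto_apply_of_mem_orthogonal this]
      simp
    calc (T b * pr) x = T b (pr x) := rfl
      _ = pr (T b (pr x)) + pr (T b (x - pr x)) := by rw [h1', h2', add_zero]
      _ = pr (T b x) := by rw [← map_add, ← hdec]
      _ = (pr * T b) x := rfl
  set E0 : Matrix n n ℂ := (Matrix.toEuclideanCLM (n := n) (𝕜 := ℂ)).symm pr with hE0
  have hTE0 : T E0 = pr := by
    rw [hT, hE0, StarAlgEquiv.apply_symm_apply]
  have hE0S : ∀ b ∈ S, b * E0 = E0 * b := by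
    intro b hb
    have := hcomm b hb
    apply (Matrix.toEuclideanCLM (n := n) (𝕜 := ℂ)).injective
    rw [_root_.map_mul, _root_.map_mul]
    show T b * T E0 = T E0 * T b
    rw [hTE0]
    exact this
  have hCE := hC E0 hE0S
  have hvW : v ∈ W := ⟨1, h1, by simp⟩
  have hfin : T C v = pr (T C v) := by
    have : T C * T E0 = T E0 * T C := by
      rw [← _root_.map_mul, ← _root_.map_mul, hCE]
    have happ : (T C * T E0) v = (T E0 * T C) v := by rw [this]
    simp only [ContinuousLinearMap.mul_apply, hTE0] at happ
    rw [hprself v hvW] at happ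
    exact happ
  have := hprW (T C v)
  rw [← hfin] at this
  exact (hmemW _).mp this

end DC

section Amp
variable {n : Type*} [Fintype n] [DecidableEq n]

private lemma kron_one_mul_apply (b : Matrix n n ℂ) (y : Matrix (n × n) (n × n) ℂ)
    (i k : n) (q : n × n) :
    ((b ⊗ₖ (1 : Matrix n n ℂ)) * y) (i, k) q = ∑ c, b i c * y (c, k) q := by
  rw [Matrix.mul_apply, Fintype.sum_prod_type]
  simp [Matrix.one_apply, ite_mul, mul_ite]

private lemma mul_kron_one_apply (b : Matrix n n ℂ) (y : Matrix (n × n) (n × n) ℂ)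
    (q : n × n) (j l : n) :
    (y * (b ⊗ₖ (1 : Matrix n n ℂ))) q (j, l) = ∑ c, y q (c, l) * b c j := by
  rw [Matrix.mul_apply, Fintype.sum_prod_type]
  simp [Matrix.one_apply, ite_mul, mul_ite]

private lemma conjT_kron_aux {m p : Type*} (A : Matrix m m ℂ) (B : Matrix p p ℂ) :
    (A ⊗ₖ B)ᴴ = Aᴴ ⊗ₖ Bᴴ := by
  ext ⟨i, k⟩ ⟨j, l⟩
  simp [Matrix.conjTranspose_apply, mul_comm]

private lemma kron_one_mulVec (M : Matrix n n ℂ) (i k : n) :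
    ((M ⊗ₖ (1 : Matrix n n ℂ)) *ᵥ (fun p : n × n => if p.1 = p.2 then 1 else 0)) (i, k)
      = M i k := by
  rw [Matrix.mulVec, dotProduct, Fintype.sum_prod_type]
  simp [Matrix.one_apply, ite_mul, mul_ite]

theorem mem_of_bicommutant (S : Set (Matrix n n ℂ))
    (h1 : (1 : Matrix n n ℂ) ∈ S)
    (hadd : ∀ a ∈ S, ∀ b ∈ S, a + b ∈ S)
    (hmul : ∀ a ∈ S, ∀ b ∈ S, a * b ∈ S)
    (hsmul : ∀ (c : ℂ), ∀ a ∈ S, c • a ∈ S)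
    (hstar : ∀ a ∈ S, star a ∈ S)
    (C : Matrix n n ℂ)
    (hC : ∀ y, (∀ b ∈ S, b * y = y * b) → C * y = y * C) :
    C ∈ S := by
  classical
  let S2 : Set (Matrix (n × n) (n × n) ℂ) := {M | ∃ b ∈ S, M = b ⊗ₖ (1 : Matrix n n ℂ)}
  have h1' : (1 : Matrix (n × n) (n × n) ℂ) ∈ S2 :=
    ⟨1, h1, (Matrix.one_kronecker_one).symm⟩
  have hadd' : ∀ a ∈ S2, ∀ b ∈ S2, a + b ∈ S2 := by
    rintro _ ⟨a, ha, rfl⟩ _ ⟨b, hb, rfl⟩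
    exact ⟨a + b, hadd a ha b hb, (Matrix.add_kronecker a b 1).symm⟩
  have hmul' : ∀ a ∈ S2, ∀ b ∈ S2, a * b ∈ S2 := by
    rintro _ ⟨a, ha, rfl⟩ _ ⟨b, hb, rfl⟩
    exact ⟨a * b, hmul a ha b hb, by rw [← Matrix.mul_kronecker_mul, one_mul]⟩
  have hsmul' : ∀ (c : ℂ), ∀ a ∈ S2, c • a ∈ S2 := by
    rintro c _ ⟨a, ha, rfl⟩
    exact ⟨c • a, hsmul c a ha, (Matrix.smul_kronecker c a 1).symm⟩
  have hstar' : ∀ a ∈ S2, star a ∈ S2 := by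
    rintro _ ⟨a, ha, rfl⟩
    refine ⟨star a, hstar a ha, ?_⟩
    simp only [Matrix.star_eq_conjTranspose, conjT_kron_aux, Matrix.conjTranspose_one]
  have hC2 : ∀ y, (∀ b ∈ S2, b * y = y * b) →
      (C ⊗ₖ (1 : Matrix n n ℂ)) * y = y * (C ⊗ₖ (1 : Matrix n n ℂ)) := by
    intro y hy
    have hblock : ∀ k l, C * (Matrix.of fun i j => y (i, k) (j, l))
        = (Matrix.of fun i j => y (i, k) (j, l)) * C := by
      intro k l
      apply hC
      intro b hb
      have hcb := hy (b ⊗ₖ (1 : Matrix n n ℂ)) ⟨b, hb, rfl⟩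
      ext i j
      have h2 := congrFun (congrFun hcb (i, k)) (j, l)
      rw [kron_one_mul_apply, mul_kron_one_apply] at h2
      simpa [Matrix.mul_apply] using h2
    ext ⟨i, k⟩ ⟨j, l⟩
    have h3 := congrFun (congrFun (hblock k l) i) j
    rw [kron_one_mul_apply, mul_kron_one_apply]
    simpa [Matrix.mul_apply] using h3
  obtain ⟨b2, hb2, heq⟩ := orbit_lemma S2 h1' hadd' hmul' hsmul' hstar'
    (C ⊗ₖ (1 : Matrix n n ℂ)) hC2
    ((WithLp.equiv 2 ((n × n) → ℂ)).symm (fun p => if p.1 = p.2 then 1 else 0))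
  obtain ⟨b, hb, rfl⟩ := hb2
  rw [WithLp.equiv_symm_apply, Matrix.toEuclideanCLM_toLp, Matrix.toEuclideanCLM_toLp] at heq
  have heq2 := (WithLp.equiv 2 ((n × n) → ℂ)).symm.injective heq
  have : C = b := by
    ext i k
    have := congrFun heq2 (i, k)
    rwa [kron_one_mulVec, kron_one_mulVec] at this
  rwa [this]

end Amp

section OneKron
variable {ιA ιB : Type*} [Fintype ιA] [Fintype ιB] [DecidableEq ιA] [DecidableEq ιB]

lemma eq_kron_one_of_commutes [Nonempty ιB] (y : Matrix (ιA × ιB) (ιA × ιB) ℂ)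
    (h : ∀ O : Matrix ιB ιB ℂ,
      ((1 : Matrix ιA ιA ℂ) ⊗ₖ O) * y = y * ((1 : Matrix ιA ιA ℂ) ⊗ₖ O)) :
    ∃ OA : Matrix ιA ιA ℂ, y = OA ⊗ₖ (1 : Matrix ιB ιB ℂ) := by
  classical
  obtain ⟨bs⟩ := ‹Nonempty ιB›
  refine ⟨Matrix.of fun a a' => y (a, bs) (a', bs), ?_⟩
  ext ⟨a, b1⟩ ⟨a', b'⟩
  have h5 := congrFun (congrFun (h (Matrix.single bs b1 1)) (a, bs)) (a', b')
  simp only [Matrix.mul_apply, Fintype.sum_prod_type, Matrix.kroneckerMap_apply,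
    Matrix.one_apply, Matrix.single, Matrix.of_apply, ite_mul, mul_ite,
    one_mul, mul_one, zero_mul, mul_zero, Finset.sum_ite_eq, Finset.sum_ite_eq',
    Finset.mem_univ, if_true, ite_and, Finset.sum_ite_irrel, Finset.sum_const_zero] at h5
  simp only [Matrix.kroneckerMap_apply, Matrix.of_apply, Matrix.one_apply, mul_ite,
    mul_one, mul_zero]
  by_cases hbb : b1 = b'
  · subst hbb; simpa using h5
  · simp only [if_neg hbb]
    simpa [hbb, Ne.symm hbb] using h5

end OneKron

/-- `M_A'` (within `L(H_code)`) is the smallest von Neumann algebra on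
`H_code` containing all operators `P_code (1 ⊗ O_Ā) P_code`, with `O_Ā` ranging over all
operators on `H_Ā` (not necessarily commuting with `P_code`). -/
theorem commutant_is_smallest (P : Matrix (ιA × ιB) (ιA × ιB) ℂ)
    (hP : P * P = P) (hPsa : IsSelfAdjoint P) :
    IsCodeVNA P (cornerCommutant P (MA P)) ∧
    (∀ OB : Matrix ιB ιB ℂ,
      P * ((1 : Matrix ιA ιA ℂ) ⊗ₖ OB) * P ∈ cornerCommutant P (MA P)) ∧
    (∀ N : Set (Matrix (ιA × ιB) (ιA × ιB) ℂ), IsCodeVNA P N →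
      (∀ OB : Matrix ιB ιB ℂ, P * ((1 : Matrix ιA ιA ℂ) ⊗ₖ OB) * P ∈ N) →
      cornerCommutant P (MA P) ⊆ N) := by
  classical
  have hPP : ∀ z : Matrix (ιA × ιB) (ιA × ιB) ℂ, P * (P * z) = P * z := fun z => by
    rw [← mul_assoc, hP]
  have hPstar : star P = P := hPsa.star_eq
  have hPH : Pᴴ = P := by rw [← Matrix.star_eq_conjTranspose]; exact hPsa.star_eq
  have hPleft : ∀ x : Matrix (ιA × ιB) (ιA × ιB) ℂ, x = P * x * P → P * x = x := by
    intro x hx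
    conv_lhs => rw [hx]
    conv_rhs => rw [hx]
    simp only [mul_assoc, hPP]
  have hPright : ∀ x : Matrix (ιA × ιB) (ιA × ιB) ℂ, x = P * x * P → x * P = x := by
    intro x hx
    conv_lhs => rw [hx]
    conv_rhs => rw [hx]
    simp only [mul_assoc, hP]
  refine ⟨⟨fun B hB => hB.1, ?_, ?_, ?_, ?_, ?_⟩, ?_, ?_⟩
  · -- P ∈ cornerCommutant
    refine ⟨by rw [hP, hP], ?_⟩
    rintro B ⟨OA, hc, rfl⟩
    simp only [mul_assoc, hP, hPP]
  · -- add
    rintro a ⟨ha1, ha2⟩ b ⟨hb1, hb2⟩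
    refine ⟨by rw [mul_add, add_mul, ← ha1, ← hb1], ?_⟩
    intro B hB
    rw [mul_add, add_mul, ha2 B hB, hb2 B hB]
  · -- mul
    rintro a ⟨ha1, ha2⟩ b ⟨hb1, hb2⟩
    constructor
    · have : P * (a * b) * P = (P * a) * (b * P) := by simp only [mul_assoc]
      rw [this, hPleft a ha1, hPright b hb1]
    · intro B hB
      calc B * (a * b) = (B * a) * b := by rw [mul_assoc]
        _ = (a * B) * b := by rw [ha2 B hB]
        _ = a * (B * b) := by rw [mul_assoc]
        _ = a * (b * B) := by rw [hb2 B hB]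
        _ = (a * b) * B := by rw [mul_assoc]
  · -- smul
    rintro c a ⟨ha1, ha2⟩
    constructor
    · rw [mul_smul_comm, smul_mul_assoc, ← ha1]
    · intro B hB
      rw [mul_smul_comm, smul_mul_assoc, ha2 B hB]
  · -- star
    rintro a ⟨ha1, ha2⟩
    constructor
    · conv_lhs => rw [ha1]
      simp only [Matrix.star_eq_conjTranspose, Matrix.conjTranspose_mul, hPH, mul_assoc]
    · intro B hB
      have hBstar : star B ∈ MA P := by
        obtain ⟨OA, hc, rfl⟩ := hB
        refine ⟨OAᴴ, ?_, ?_⟩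
        · have h' := congrArg star hc.eq
          simp only [Matrix.star_eq_conjTranspose, Matrix.conjTranspose_mul, conjT_kron_aux,
            Matrix.conjTranspose_one, hPH] at h'
          exact h'.symm
        · simp only [Matrix.star_eq_conjTranspose, Matrix.conjTranspose_mul, conjT_kron_aux,
            Matrix.conjTranspose_one, hPH, mul_assoc]
      have h2 := ha2 (star B) hBstar
      have h3 := congrArg star h2
      simp only [Matrix.star_eq_conjTranspose, Matrix.conjTranspose_mul,
        Matrix.conjTranspose_conjTranspose] at h3
      exact h3.symm
  · -- part 2
    intro OB
    constructor
    · simp only [mul_assoc, hP, hPP]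
    · rintro B ⟨OA, hc, rfl⟩
      have hc' : (OA ⊗ₖ (1 : Matrix ιB ιB ℂ)) * P = P * (OA ⊗ₖ (1 : Matrix ιB ιB ℂ)) := hc.eq
      have hcz : ∀ z, (OA ⊗ₖ (1 : Matrix ιB ιB ℂ)) * (P * z)
          = P * ((OA ⊗ₖ (1 : Matrix ιB ιB ℂ)) * z) := fun z => by
        rw [← mul_assoc, hc', mul_assoc]
      have hmix : (OA ⊗ₖ (1 : Matrix ιB ιB ℂ)) * ((1 : Matrix ιA ιA ℂ) ⊗ₖ OB)
          = ((1 : Matrix ιA ιA ℂ) ⊗ₖ OB) * (OA ⊗ₖ (1 : Matrix ιB ιB ℂ)) := by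
        rw [← Matrix.mul_kronecker_mul, ← Matrix.mul_kronecker_mul, one_mul, mul_one,
          one_mul, mul_one]
      have hmixz : ∀ z, (OA ⊗ₖ (1 : Matrix ιB ιB ℂ)) * (((1 : Matrix ιA ιA ℂ) ⊗ₖ OB) * z)
          = ((1 : Matrix ιA ιA ℂ) ⊗ₖ OB) * ((OA ⊗ₖ (1 : Matrix ιB ιB ℂ)) * z) := fun z => by
        rw [← mul_assoc, hmix, mul_assoc]
      simp only [mul_assoc, hPP, hcz, hmixz, hc']
  · -- part 3
    intro N hN hNcomp C hCmem
    obtain ⟨hC1, hC2⟩ := hCmem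
    obtain ⟨hN1, hNP, hNadd, hNmul, hNsmul, hNstar⟩ := hN
    rcases isEmpty_or_nonempty ιB with hB | hB
    · have : C = P := by
        ext ⟨i, b⟩ j
        exact (hB.false b).elim
      rw [this]; exact hNP
    · -- main (nonempty) case
      have hN0 : (0 : Matrix (ιA × ιB) (ιA × ιB) ℂ) ∈ N := by
        simpa using hNsmul 0 P hNP
      set e1 : Matrix ιA ιA ℂ := 1 with he1
      set G : Set (Matrix (ιA × ιB) (ιA × ιB) ℂ) := {m | m ∈ N ∧ m = P * m * P} with hG
      set Dgen : Set (Matrix (ιA × ιB) (ιA × ιB) ℂ) := {w | ∃ Ol Or m, m ∈ G ∧ w = (e1 ⊗ₖ Ol) * m * (e1 ⊗ₖ Or)} with hDgen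
      set Dspan : Submodule ℂ (Matrix (ιA × ιB) (ιA × ιB) ℂ) := Submodule.span ℂ Dgen with hDspan
      set S : Set (Matrix (ιA × ιB) (ιA × ιB) ℂ) := {w | ∃ OB D, D ∈ Dspan ∧ w = (e1 ⊗ₖ OB) + D} with hS
      have hkron : ∀ O1 O2 : Matrix ιB ιB ℂ, (e1 ⊗ₖ O1) * (e1 ⊗ₖ O2) = e1 ⊗ₖ (O1 * O2) := by
        intro O1 O2
        rw [← Matrix.mul_kronecker_mul, one_mul]
      have hGP : P ∈ G := ⟨hNP, by rw [hP, hP]⟩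
      have hGcomp : ∀ X : Matrix ιB ιB ℂ, P * (e1 ⊗ₖ X) * P ∈ G := fun X =>
        ⟨hNcomp X, by simp only [mul_assoc, hP, hPP]⟩
      have hGmid : ∀ m ∈ G, ∀ X : Matrix ιB ιB ℂ, ∀ m' ∈ G,
          m * (e1 ⊗ₖ X) * m' ∈ G := by
        intro m hm X m' hm'
        have hmP : m * P = m := hPright m hm.2
        have hPm' : P * m' = m' := hPleft m' hm'.2
        have heq : m * (e1 ⊗ₖ X) * m' = m * (P * (e1 ⊗ₖ X) * P) * m' := by
          calc m * (e1 ⊗ₖ X) * m' = (m * P) * (e1 ⊗ₖ X) * (P * m') := by rw [hmP, hPm']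
            _ = m * (P * (e1 ⊗ₖ X) * P) * m' := by simp only [mul_assoc]
        constructor
        · rw [heq]
          exact hNmul _ (hNmul m hm.1 _ (hNcomp X)) m' hm'.1
        · have h1 : P * m = m := hPleft m hm.2
          have h2 : m' * P = m' := hPright m' hm'.2
          calc m * (e1 ⊗ₖ X) * m' = (P * m) * (e1 ⊗ₖ X) * (m' * P) := by rw [h1, h2]
            _ = P * (m * (e1 ⊗ₖ X) * m') * P := by simp only [mul_assoc]
      have hDleft : ∀ O : Matrix ιB ιB ℂ, ∀ D ∈ Dspan, (e1 ⊗ₖ O) * D ∈ Dspan := by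
        intro O D hD
        induction hD using Submodule.span_induction with
        | mem x hx =>
          obtain ⟨Ol, Or, m, hm, rfl⟩ := hx
          refine Submodule.subset_span ⟨O * Ol, Or, m, hm, ?_⟩
          rw [← hkron O Ol]
          simp only [mul_assoc]
        | zero => rw [mul_zero]; exact Submodule.zero_mem _
        | add x y hx hy ihx ihy => rw [mul_add]; exact Submodule.add_mem _ ihx ihy
        | smul c x hx ihx => rw [mul_smul_comm]; exact Submodule.smul_mem _ c ihx
      have hDright : ∀ O : Matrix ιB ιB ℂ, ∀ D ∈ Dspan, D * (e1 ⊗ₖ O) ∈ Dspan := by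
        intro O D hD
        induction hD using Submodule.span_induction with
        | mem x hx =>
          obtain ⟨Ol, Or, m, hm, rfl⟩ := hx
          refine Submodule.subset_span ⟨Ol, Or * O, m, hm, ?_⟩
          rw [← hkron Or O]
          simp only [mul_assoc]
        | zero => rw [zero_mul]; exact Submodule.zero_mem _
        | add x y hx hy ihx ihy => rw [add_mul]; exact Submodule.add_mem _ ihx ihy
        | smul c x hx ihx => rw [smul_mul_assoc]; exact Submodule.smul_mem _ c ihx
      have hDmul : ∀ D ∈ Dspan, ∀ D' ∈ Dspan, D * D' ∈ Dspan := by
        intro D hD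
        induction hD using Submodule.span_induction with
        | mem x hx =>
          intro D' hD'
          induction hD' using Submodule.span_induction with
          | mem x' hx' =>
            obtain ⟨Ol, Or, m, hm, rfl⟩ := hx
            obtain ⟨Ol', Or', m', hm', rfl⟩ := hx'
            refine Submodule.subset_span
              ⟨Ol, Or', m * (e1 ⊗ₖ (Or * Ol')) * m', hGmid m hm _ m' hm', ?_⟩
            rw [← hkron Or Ol']
            simp only [mul_assoc]
          | zero => rw [mul_zero]; exact Submodule.zero_mem _
          | add x' y' hx' hy' ihx ihy => rw [mul_add]; exact Submodule.add_mem _ ihx ihy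
          | smul c x' hx' ihx => rw [mul_smul_comm]; exact Submodule.smul_mem _ c ihx
        | zero => intro D' hD'; rw [zero_mul]; exact Submodule.zero_mem _
        | add x y hx hy ihx ihy =>
          intro D' hD'
          rw [add_mul]; exact Submodule.add_mem _ (ihx D' hD') (ihy D' hD')
        | smul c x hx ihx =>
          intro D' hD'
          rw [smul_mul_assoc]; exact Submodule.smul_mem _ c (ihx D' hD')
      have hDstar : ∀ D ∈ Dspan, star D ∈ Dspan := by
        intro D hD
        induction hD using Submodule.span_induction with
        | mem x hx =>
          obtain ⟨Ol, Or, m, hm, rfl⟩ := hx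
          have hmstar : star m ∈ G := by
            refine ⟨hNstar m hm.1, ?_⟩
            conv_lhs => rw [hm.2]
            simp only [Matrix.star_eq_conjTranspose, Matrix.conjTranspose_mul, hPH,
              mul_assoc]
          refine Submodule.subset_span ⟨Orᴴ, Olᴴ, star m, hmstar, ?_⟩
          simp only [Matrix.star_eq_conjTranspose, Matrix.conjTranspose_mul, conjT_kron_aux,
            Matrix.conjTranspose_one, he1, mul_assoc]
        | zero => rw [star_zero]; exact Submodule.zero_mem _
        | add x y hx hy ihx ihy => rw [star_add]; exact Submodule.add_mem _ ihx ihy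
        | smul c x hx ihx =>
          rw [star_smul]
          exact Submodule.smul_mem _ _ ihx
      -- closure properties of S
      have hS1 : (1 : Matrix (ιA × ιB) (ιA × ιB) ℂ) ∈ S := ⟨1, 0, Submodule.zero_mem _, by
        rw [add_zero, he1, Matrix.one_kronecker_one]⟩
      have hSadd : ∀ a ∈ S, ∀ b ∈ S, a + b ∈ S := by
        rintro _ ⟨O1, D1, hD1, rfl⟩ _ ⟨O2, D2, hD2, rfl⟩
        refine ⟨O1 + O2, D1 + D2, Submodule.add_mem _ hD1 hD2, ?_⟩
        rw [Matrix.kronecker_add]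
        abel
      have hSsmul : ∀ (c : ℂ), ∀ a ∈ S, c • a ∈ S := by
        rintro c _ ⟨O, D, hD, rfl⟩
        refine ⟨c • O, c • D, Submodule.smul_mem _ c hD, ?_⟩
        rw [Matrix.kronecker_smul, smul_add]
      have hSmul : ∀ a ∈ S, ∀ b ∈ S, a * b ∈ S := by
        rintro _ ⟨O1, D1, hD1, rfl⟩ _ ⟨O2, D2, hD2, rfl⟩
        refine ⟨O1 * O2, (e1 ⊗ₖ O1) * D2 + D1 * (e1 ⊗ₖ O2) + D1 * D2,
          Submodule.add_mem _ (Submodule.add_mem _ (hDleft O1 D2 hD2)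
            (hDright O2 D1 hD1)) (hDmul D1 hD1 D2 hD2), ?_⟩
        rw [add_mul, mul_add, mul_add, hkron]
        abel
      have hSstar : ∀ a ∈ S, star a ∈ S := by
        rintro _ ⟨O, D, hD, rfl⟩
        refine ⟨Oᴴ, star D, hDstar D hD, ?_⟩
        rw [star_add]
        congr 1
        simp only [Matrix.star_eq_conjTranspose, conjT_kron_aux, he1, Matrix.conjTranspose_one]
      have hSP : P ∈ S := by
        refine ⟨0, P, Submodule.subset_span ⟨1, 1, P, hGP, ?_⟩, ?_⟩
        · rw [he1, Matrix.one_kronecker_one, one_mul, mul_one]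
        · rw [Matrix.kronecker_zero, zero_add]
      have hSOB : ∀ O : Matrix ιB ιB ℂ, (e1 ⊗ₖ O) ∈ S :=
        fun O => ⟨O, 0, Submodule.zero_mem _, (add_zero _).symm⟩
      -- C lies in the bicommutant of S
      have hCS : C ∈ S := by
        apply mem_of_bicommutant S hS1 hSadd hSmul hSsmul hSstar C
        intro y hy
        obtain ⟨OA, rfl⟩ := eq_kron_one_of_commutes y (fun O => hy (e1 ⊗ₖ O) (hSOB O))
        have hyP : P * (OA ⊗ₖ (1 : Matrix ιB ιB ℂ)) = (OA ⊗ₖ (1 : Matrix ιB ιB ℂ)) * P :=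
          hy P hSP
        set y := OA ⊗ₖ (1 : Matrix ιB ιB ℂ) with hy0
        have he : P * y * P = P * y := by
          rw [mul_assoc, ← hyP, ← mul_assoc, hP]
        have hBMA : P * y * P ∈ MA P := ⟨OA, hyP.symm, rfl⟩
        have hcm := hC2 _ hBMA
        have hCP : C * P = C := hPright C hC1
        have hPC : P * C = C := hPleft C hC1
        calc C * y = (C * P) * y := by rw [hCP]
          _ = C * (P * y) := by rw [mul_assoc]
          _ = C * (P * y * P) := by rw [he]
          _ = (P * y * P) * C := (hcm).symm ▸ rfl
          _ = (P * y) * C := by rw [he]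
          _ = (y * P) * C := by rw [hyP]
          _ = y * (P * C) := by rw [mul_assoc]
          _ = y * C := by rw [hPC]
      have hPDPall : ∀ D ∈ Dspan, P * D * P ∈ N := by
        intro D hD
        induction hD using Submodule.span_induction with
        | mem x hx =>
          obtain ⟨Ol, Or, m, hm, rfl⟩ := hx
          have heq : P * ((e1 ⊗ₖ Ol) * m * (e1 ⊗ₖ Or)) * P
              = (P * (e1 ⊗ₖ Ol) * P) * m * (P * (e1 ⊗ₖ Or) * P) := by
            conv_lhs => rw [hm.2]
            simp only [mul_assoc]
          rw [heq]
          exact hNmul _ (hNmul _ (hNcomp Ol) m hm.1) _ (hNcomp Or)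
        | zero => rw [mul_zero, zero_mul]; exact hN0
        | add x y hx hy ihx ihy => rw [mul_add, add_mul]; exact hNadd _ ihx _ ihy
        | smul c x hx ihx =>
          rw [mul_smul_comm, smul_mul_assoc]
          exact hNsmul c _ ihx
      obtain ⟨OB, D, hD, hCeq⟩ := hCS
      have hPDP : P * D * P ∈ N := hPDPall D hD
      have hfin : C = P * (e1 ⊗ₖ OB) * P + P * D * P := by
        calc C = P * C * P := hC1
          _ = P * ((e1 ⊗ₖ OB) + D) * P := by rw [← hCeq]
          _ = P * (e1 ⊗ₖ OB) * P + P * D * P := by rw [mul_add, add_mul]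
      rw [hfin]
      exact hNadd _ (hNcomp OB) _ hPDP
end

section
/- On C^4, define M_a as the von Neumann algebra generated by {S̃^1, |0⟩⟨0|+|3⟩⟨3|, |1⟩⟨1|+|2⟩⟨2|, 1} and M_ā as the von Neumann algebra generated by {S̃^3, |0⟩⟨0|+|1⟩⟨1|, |2⟩⟨2|+|3⟩⟨3|, 1}. Then M_ā = M_a', the center Z(M_a) = C·1 is trivial, and there is a unitary isomorphism C^4 ≅ C^2 ⊗ C^2 (sending |0⟩↦|↑↑⟩, |1⟩↦|↑↓⟩, |3⟩↦|↓↑⟩, |2⟩↦|↓↓⟩) under which M_a = L(C^2) ⊗ C·1 and M_ā = C·1 ⊗ L(C^2). -/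
open Matrix Kronecker

/-- `S̃¹ = |0⟩⟨1|+|1⟩⟨0|+|2⟩⟨3|+|3⟩⟨2|` on `ℂ⁴`. -/
noncomputable def St1 : Matrix (Fin 4) (Fin 4) ℂ :=
  Matrix.single 0 1 1 + Matrix.single 1 0 1 + Matrix.single 2 3 1 + Matrix.single 3 2 1

/-- `S̃³ = |0⟩⟨3|+|3⟩⟨0|+|1⟩⟨2|+|2⟩⟨1|` on `ℂ⁴`. -/
noncomputable def St3 : Matrix (Fin 4) (Fin 4) ℂ :=
  Matrix.single 0 3 1 + Matrix.single 3 0 1 + Matrix.single 1 2 1 + Matrix.single 2 1 1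

/-- `M_a`: the von Neumann algebra generated by `{S̃¹, |0⟩⟨0|+|3⟩⟨3|, |1⟩⟨1|+|2⟩⟨2|, 1}`. -/
noncomputable def Ma : StarSubalgebra ℂ (Matrix (Fin 4) (Fin 4) ℂ) :=
  StarAlgebra.adjoin ℂ
    {St1, Matrix.single 0 0 1 + Matrix.single 3 3 1,
      Matrix.single 1 1 1 + Matrix.single 2 2 1}

/-- `M_ā`: the von Neumann algebra generated by `{S̃³, |0⟩⟨0|+|1⟩⟨1|, |2⟩⟨2|+|3⟩⟨3|, 1}`. -/
noncomputable def Mabar : StarSubalgebra ℂ (Matrix (Fin 4) (Fin 4) ℂ) :=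
  StarAlgebra.adjoin ℂ
    {St3, Matrix.single 0 0 1 + Matrix.single 1 1 1,
      Matrix.single 2 2 1 + Matrix.single 3 3 1}

/-- The basis identification `ℂ⁴ ≅ ℂ² ⊗ ℂ²` sending
`|0⟩ ↦ |↑↑⟩, |1⟩ ↦ |↑↓⟩, |3⟩ ↦ |↓↑⟩, |2⟩ ↦ |↓↓⟩`, where the first component of the pair
carries the factor on which `M_a` acts. -/
def e : Fin 4 ≃ Fin 2 × Fin 2 where
  toFun := ![(0, 0), (1, 0), (1, 1), (0, 1)]
  invFun := fun p => ![![0, 3], ![1, 2]] p.1 p.2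
  left_inv := by decide
  right_inv := by decide


noncomputable def F (A : Matrix (Fin 2) (Fin 2) ℂ) : Matrix (Fin 4) (Fin 4) ℂ :=
  Matrix.reindex e.symm e.symm (A ⊗ₖ (1 : Matrix (Fin 2) (Fin 2) ℂ))

noncomputable def G (A : Matrix (Fin 2) (Fin 2) ℂ) : Matrix (Fin 4) (Fin 4) ℂ :=
  Matrix.reindex e.symm e.symm ((1 : Matrix (Fin 2) (Fin 2) ℂ) ⊗ₖ A)

lemma F_mul (A B) : F A * F B = F (A * B) := by
  simp only [F, ← Matrix.reindexAlgEquiv_apply ℂ, ← _root_.map_mul]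
  rw [← Matrix.mul_kronecker_mul, one_mul]

lemma G_mul (A B) : G A * G B = G (A * B) := by
  simp only [G, ← Matrix.reindexAlgEquiv_apply ℂ, ← _root_.map_mul]
  rw [← Matrix.mul_kronecker_mul, one_mul]

lemma FG_comm (A B) : F A * G B = G B * F A := by
  simp only [F, G, ← Matrix.reindexAlgEquiv_apply ℂ, ← _root_.map_mul]
  rw [← Matrix.mul_kronecker_mul, ← Matrix.mul_kronecker_mul, one_mul, mul_one, one_mul, mul_one]

lemma F_one : F 1 = 1 := by
  rw [F, Matrix.one_kronecker_one, ← Matrix.reindexAlgEquiv_apply ℂ, _root_.map_one]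

lemma F_smul (c : ℂ) (A) : F (c • A) = c • F A := by
  ext i j
  simp [F, Matrix.smul_kronecker]

lemma F_add (A B) : F (A + B) = F A + F B := by
  ext i j
  simp [F, Matrix.add_kronecker]

lemma G_one : G 1 = 1 := by
  rw [G, Matrix.one_kronecker_one, ← Matrix.reindexAlgEquiv_apply ℂ, _root_.map_one]

lemma G_smul (c : ℂ) (A) : G (c • A) = c • G A := by
  ext i j
  simp [G, Matrix.kronecker_smul]

lemma G_add (A B) : G (A + B) = G A + G B := by
  ext i j
  simp [G, Matrix.kronecker_add]

lemma kron_star (A B : Matrix (Fin 2) (Fin 2) ℂ) :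
    star (A ⊗ₖ B) = star A ⊗ₖ star B := by
  ext i j
  simp [Matrix.star_apply, kroneckerMap_apply, mul_comm]

lemma F_star (A) : star (F A) = F (star A) := by
  ext i j
  simp [F, Matrix.star_apply, kroneckerMap_apply, Matrix.one_apply, mul_comm, eq_comm,
    Matrix.star_eq_conjTranspose, Matrix.conjTranspose_apply]
  split <;> simp

lemma G_star (A) : star (G A) = G (star A) := by
  ext i j
  simp [G, Matrix.star_apply, kroneckerMap_apply, Matrix.one_apply, mul_comm, eq_comm,
    Matrix.star_eq_conjTranspose, Matrix.conjTranspose_apply]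
  split <;> simp


lemma hSt1 : St1 = F !![0,1;1,0] := by
  ext i j
  fin_cases i <;> fin_cases j <;>
    simp [St1, F, e, Matrix.single, kroneckerMap_apply, Matrix.one_apply]

lemma hP03 : Matrix.single 0 0 1 + Matrix.single 3 3 1 = F !![1,0;0,0] := by
  ext i j
  fin_cases i <;> fin_cases j <;>
    simp [F, e, Matrix.single, kroneckerMap_apply, Matrix.one_apply]

lemma hP12 : Matrix.single 1 1 1 + Matrix.single 2 2 1 = F !![0,0;0,1] := by
  ext i j
  fin_cases i <;> fin_cases j <;>
    simp [F, e, Matrix.single, kroneckerMap_apply, Matrix.one_apply]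

lemma hE01 : F !![0,1;0,0] = (Matrix.single 0 0 1 + Matrix.single 3 3 1) * St1 := by
  ext i j
  fin_cases i <;> fin_cases j <;>
    simp [St1, F, e, Matrix.single, kroneckerMap_apply, Matrix.one_apply,
      Matrix.mul_apply, Fin.sum_univ_four]

lemma hE10 : F !![0,0;1,0] = (Matrix.single 1 1 1 + Matrix.single 2 2 1) * St1 := by
  ext i j
  fin_cases i <;> fin_cases j <;>
    simp [St1, F, e, Matrix.single, kroneckerMap_apply, Matrix.one_apply,
      Matrix.mul_apply, Fin.sum_univ_four]

lemma F_decomp (A : Matrix (Fin 2) (Fin 2) ℂ) :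
    F A = A 0 0 • F !![1,0;0,0] + A 0 1 • F !![0,1;0,0]
      + A 1 0 • F !![0,0;1,0] + A 1 1 • F !![0,0;0,1] := by
  have hA : A 0 0 • (!![1,0;0,0] : Matrix (Fin 2) (Fin 2) ℂ) + A 0 1 • !![0,1;0,0]
      + A 1 0 • !![0,0;1,0] + A 1 1 • !![0,0;0,1] = A := by
    ext i j
    fin_cases i <;> fin_cases j <;> simp
  conv_lhs => rw [← hA]
  rw [F_add, F_add, F_add, F_smul, F_smul, F_smul, F_smul]

lemma F_mem (A : Matrix (Fin 2) (Fin 2) ℂ) : F A ∈ Ma := by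
  have h1 : St1 ∈ Ma := StarAlgebra.subset_adjoin ℂ _ (by left; rfl)
  have h2 : Matrix.single 0 0 1 + Matrix.single 3 3 1 ∈ Ma :=
    StarAlgebra.subset_adjoin ℂ _ (by right; left; rfl)
  have h3 : Matrix.single 1 1 1 + Matrix.single 2 2 1 ∈ Ma :=
    StarAlgebra.subset_adjoin ℂ _ (by right; right; rfl)
  rw [F_decomp]
  exact add_mem (add_mem (add_mem (Ma.smul_mem (hP03 ▸ h2) _)
    (Ma.smul_mem (hE01 ▸ mul_mem h2 h1) _)) (Ma.smul_mem (hE10 ▸ mul_mem h3 h1) _))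
    (Ma.smul_mem (hP12 ▸ h3) _)

lemma ma_char (M : Matrix (Fin 4) (Fin 4) ℂ) : M ∈ Ma ↔ ∃ A, M = F A := by
  constructor
  · intro hM
    induction hM using StarAlgebra.adjoin_induction with
    | mem x hx =>
      rcases hx with h | h | h
      · exact ⟨_, h ▸ hSt1⟩
      · exact ⟨_, h ▸ hP03⟩
      · exact ⟨_, h ▸ hP12⟩
    | algebraMap r =>
      refine ⟨r • 1, ?_⟩
      rw [F_smul, F_one, Algebra.algebraMap_eq_smul_one]
    | add x y hx hy ihx ihy =>
      obtain ⟨A, rfl⟩ := ihx; obtain ⟨B, rfl⟩ := ihy; exact ⟨A + B, (F_add A B).symm⟩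
    | mul x y hx hy ihx ihy =>
      obtain ⟨A, rfl⟩ := ihx; obtain ⟨B, rfl⟩ := ihy; exact ⟨A * B, (F_mul A B)⟩
    | star x hx ihx =>
      obtain ⟨A, rfl⟩ := ihx; exact ⟨star A, (F_star A)⟩
  · rintro ⟨A, rfl⟩; exact F_mem A

lemma hSt3 : St3 = G !![0,1;1,0] := by
  ext i j
  fin_cases i <;> fin_cases j <;>
    simp [St3, G, e, Matrix.single, kroneckerMap_apply, Matrix.one_apply]

lemma hP01 : Matrix.single 0 0 1 + Matrix.single 1 1 1 = G !![1,0;0,0] := by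
  ext i j
  fin_cases i <;> fin_cases j <;>
    simp [G, e, Matrix.single, kroneckerMap_apply, Matrix.one_apply]

lemma hP23 : Matrix.single 2 2 1 + Matrix.single 3 3 1 = G !![0,0;0,1] := by
  ext i j
  fin_cases i <;> fin_cases j <;>
    simp [G, e, Matrix.single, kroneckerMap_apply, Matrix.one_apply]

lemma hE01' : G !![0,1;0,0] = (Matrix.single 0 0 1 + Matrix.single 1 1 1) * St3 := by
  ext i j
  fin_cases i <;> fin_cases j <;>
    simp [St3, G, e, Matrix.single, kroneckerMap_apply, Matrix.one_apply,
      Matrix.mul_apply, Fin.sum_univ_four]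

lemma hE10' : G !![0,0;1,0] = St3 * (Matrix.single 0 0 1 + Matrix.single 1 1 1) := by
  ext i j
  fin_cases i <;> fin_cases j <;>
    simp [St3, G, e, Matrix.single, kroneckerMap_apply, Matrix.one_apply,
      Matrix.mul_apply, Fin.sum_univ_four]

lemma G_decomp (A : Matrix (Fin 2) (Fin 2) ℂ) :
    G A = A 0 0 • G !![1,0;0,0] + A 0 1 • G !![0,1;0,0]
      + A 1 0 • G !![0,0;1,0] + A 1 1 • G !![0,0;0,1] := by
  have hA : A 0 0 • (!![1,0;0,0] : Matrix (Fin 2) (Fin 2) ℂ) + A 0 1 • !![0,1;0,0]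
      + A 1 0 • !![0,0;1,0] + A 1 1 • !![0,0;0,1] = A := by
    ext i j
    fin_cases i <;> fin_cases j <;> simp
  conv_lhs => rw [← hA]
  rw [G_add, G_add, G_add, G_smul, G_smul, G_smul, G_smul]

lemma G_mem (A : Matrix (Fin 2) (Fin 2) ℂ) : G A ∈ Mabar := by
  have h1 : St3 ∈ Mabar := StarAlgebra.subset_adjoin ℂ _ (by left; rfl)
  have h2 : Matrix.single 0 0 1 + Matrix.single 1 1 1 ∈ Mabar :=
    StarAlgebra.subset_adjoin ℂ _ (by right; left; rfl)
  have h3 : Matrix.single 2 2 1 + Matrix.single 3 3 1 ∈ Mabar :=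
    StarAlgebra.subset_adjoin ℂ _ (by right; right; rfl)
  rw [G_decomp]
  exact add_mem (add_mem (add_mem (Mabar.smul_mem (hP01 ▸ h2) _)
    (Mabar.smul_mem (hE01' ▸ mul_mem h2 h1) _)) (Mabar.smul_mem (hE10' ▸ mul_mem h1 h2) _))
    (Mabar.smul_mem (hP23 ▸ h3) _)

lemma mabar_char (M : Matrix (Fin 4) (Fin 4) ℂ) : M ∈ Mabar ↔ ∃ A, M = G A := by
  constructor
  · intro hM
    induction hM using StarAlgebra.adjoin_induction with
    | mem x hx =>
      rcases hx with h | h | h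
      · exact ⟨_, h ▸ hSt3⟩
      · exact ⟨_, h ▸ hP01⟩
      · exact ⟨_, h ▸ hP23⟩
    | algebraMap r =>
      refine ⟨r • 1, ?_⟩
      rw [G_smul, G_one, Algebra.algebraMap_eq_smul_one]
    | add x y hx hy ihx ihy =>
      obtain ⟨A, rfl⟩ := ihx; obtain ⟨B, rfl⟩ := ihy; exact ⟨A + B, (G_add A B).symm⟩
    | mul x y hx hy ihx ihy =>
      obtain ⟨A, rfl⟩ := ihx; obtain ⟨B, rfl⟩ := ihy; exact ⟨A * B, G_mul A B⟩
    | star x hx ihx =>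
      obtain ⟨A, rfl⟩ := ihx; exact ⟨star A, G_star A⟩
  · rintro ⟨A, rfl⟩; exact G_mem A

lemma centralizer_to_G (M : Matrix (Fin 4) (Fin 4) ℂ)
    (h1 : M * St1 = St1 * M)
    (h2 : M * (Matrix.single 1 1 1 + Matrix.single 2 2 1)
        = (Matrix.single 1 1 1 + Matrix.single 2 2 1) * M) :
    M = G !![M 0 0, M 0 3; M 3 0, M 3 3] := by
  have q := Matrix.ext_iff.mpr h2
  have p := Matrix.ext_iff.mpr h1
  have z01 : M 0 1 = 0 := by
    have := q 0 1; simpa [Matrix.mul_apply, Fin.sum_univ_four, Matrix.single] using this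
  have z02 : M 0 2 = 0 := by
    have := q 0 2; simpa [Matrix.mul_apply, Fin.sum_univ_four, Matrix.single] using this
  have z31 : M 3 1 = 0 := by
    have := q 3 1; simpa [Matrix.mul_apply, Fin.sum_univ_four, Matrix.single] using this
  have z32 : M 3 2 = 0 := by
    have := q 3 2; simpa [Matrix.mul_apply, Fin.sum_univ_four, Matrix.single] using this
  have z10 : 0 = M 1 0 := by
    have := q 1 0; simpa [Matrix.mul_apply, Fin.sum_univ_four, Matrix.single] using this
  have z13 : 0 = M 1 3 := by
    have := q 1 3; simpa [Matrix.mul_apply, Fin.sum_univ_four, Matrix.single] using this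
  have z20 : 0 = M 2 0 := by
    have := q 2 0; simpa [Matrix.mul_apply, Fin.sum_univ_four, Matrix.single] using this
  have z23 : 0 = M 2 3 := by
    have := q 2 3; simpa [Matrix.mul_apply, Fin.sum_univ_four, Matrix.single] using this
  have e11 : M 0 0 = M 1 1 := by
    have := p 0 1
    simpa [St1, Matrix.mul_apply, Fin.sum_univ_four, Matrix.single] using this
  have e12 : M 0 3 = M 1 2 := by
    have := p 0 2
    simpa [St1, Matrix.mul_apply, Fin.sum_univ_four, Matrix.single] using this
  have e21 : M 3 0 = M 2 1 := by
    have := p 3 1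
    simpa [St1, Matrix.mul_apply, Fin.sum_univ_four, Matrix.single] using this
  have e22 : M 3 3 = M 2 2 := by
    have := p 3 2
    simpa [St1, Matrix.mul_apply, Fin.sum_univ_four, Matrix.single] using this
  ext i j
  fin_cases i <;> fin_cases j <;>
    simp [G, e, kroneckerMap_apply, Matrix.one_apply, z01, z02, z31, z32, ← z10, ← z13, ← z20, ← z23,
      e11, e12, e21, e22]

lemma F_apply (A : Matrix (Fin 2) (Fin 2) ℂ) (i j : Fin 4) :
    F A i j = A (e i).1 (e j).1 * (if (e i).2 = (e j).2 then 1 else 0) := by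
  simp [F, kroneckerMap_apply, Matrix.one_apply]

lemma G_apply (A : Matrix (Fin 2) (Fin 2) ℂ) (i j : Fin 4) :
    G A i j = (if (e i).1 = (e j).1 then 1 else 0) * A (e i).2 (e j).2 := by
  simp [G, kroneckerMap_apply, Matrix.one_apply]

lemma reindex_F (A : Matrix (Fin 2) (Fin 2) ℂ) :
    Matrix.reindex e e (F A) = A ⊗ₖ (1 : Matrix (Fin 2) (Fin 2) ℂ) := by
  ext i j
  simp [F]

lemma reindex_G (A : Matrix (Fin 2) (Fin 2) ℂ) :
    Matrix.reindex e e (G A) = (1 : Matrix (Fin 2) (Fin 2) ℂ) ⊗ₖ A := by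
  ext i j
  simp [G]

lemma cent_eq : Set.centralizer (Ma : Set (Matrix (Fin 4) (Fin 4) ℂ))
    = (Mabar : Set (Matrix (Fin 4) (Fin 4) ℂ)) := by
  ext x
  constructor
  · intro hx
    have h1 : St1 ∈ Ma := StarAlgebra.subset_adjoin ℂ _ (by left; rfl)
    have h3 : Matrix.single 1 1 1 + Matrix.single 2 2 1 ∈ Ma :=
      StarAlgebra.subset_adjoin ℂ _ (by right; right; rfl)
    have c1 := hx _ h1
    have c3 := hx _ h3
    have := centralizer_to_G x c1.symm c3.symm
    exact (mabar_char x).2 ⟨_, this⟩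
  · intro hx m hm
    obtain ⟨B, rfl⟩ := (mabar_char x).1 hx
    obtain ⟨A, rfl⟩ := (ma_char m).1 hm
    exact FG_comm A B

/-- **type-3 split.** `M_ā = M_a'`, the center `Z(M_a) = ℂ·1` is trivial,
and under the unitary identification `ℂ⁴ ≅ ℂ² ⊗ ℂ²` given by `e` one has
`M_a = L(ℂ²) ⊗ ℂ·1` and `M_ā = ℂ·1 ⊗ L(ℂ²)`. -/
theorem type_three_split :
    (Mabar : Set (Matrix (Fin 4) (Fin 4) ℂ)) =
      Set.centralizer (Ma : Set (Matrix (Fin 4) (Fin 4) ℂ)) ∧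
    (Ma : Set (Matrix (Fin 4) (Fin 4) ℂ)) ∩
        Set.centralizer (Ma : Set (Matrix (Fin 4) (Fin 4) ℂ)) =
      Set.range (fun c : ℂ => c • (1 : Matrix (Fin 4) (Fin 4) ℂ)) ∧
    (fun M => Matrix.reindex e e M) '' (Ma : Set (Matrix (Fin 4) (Fin 4) ℂ)) =
      {B : Matrix (Fin 2 × Fin 2) (Fin 2 × Fin 2) ℂ |
        ∃ A : Matrix (Fin 2) (Fin 2) ℂ, B = A ⊗ₖ (1 : Matrix (Fin 2) (Fin 2) ℂ)} ∧
    (fun M => Matrix.reindex e e M) '' (Mabar : Set (Matrix (Fin 4) (Fin 4) ℂ)) =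
      {B : Matrix (Fin 2 × Fin 2) (Fin 2 × Fin 2) ℂ |
        ∃ A : Matrix (Fin 2) (Fin 2) ℂ, B = (1 : Matrix (Fin 2) (Fin 2) ℂ) ⊗ₖ A} := by
  refine ⟨cent_eq.symm, ?_, ?_, ?_⟩
  · ext x
    constructor
    · rintro ⟨hxa, hxc⟩
      rw [cent_eq] at hxc
      obtain ⟨A, rfl⟩ := (ma_char x).1 hxa
      obtain ⟨B, hB⟩ := (mabar_char _).1 hxc
      have hent := Matrix.ext_iff.mpr hB
      have h01 : A 0 1 = 0 := by
        have := hent 0 1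
        simpa [F_apply, G_apply, e] using this
      have h10 : A 1 0 = 0 := by
        have := hent 1 0
        simpa [F_apply, G_apply, e] using this
      have h00 : A 0 0 = B 0 0 := by
        have := hent 0 0
        simpa [F_apply, G_apply, e] using this
      have h11 : A 1 1 = B 0 0 := by
        have := hent 1 1
        simpa [F_apply, G_apply, e] using this
      have hA : A = A 0 0 • 1 := by
        ext i j
        fin_cases i <;> fin_cases j <;>
          simp [h01, h10, h00, h11, Matrix.one_apply]
      have hx : F A = A 0 0 • 1 := by
        conv_lhs => rw [hA]
        rw [F_smul, F_one]
      exact ⟨A 0 0, hx.symm⟩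
    · rintro ⟨c, rfl⟩
      constructor
      · show c • (1 : Matrix (Fin 4) (Fin 4) ℂ) ∈ (Ma : Set _)
        have : (c • (1 : Matrix (Fin 4) (Fin 4) ℂ)) = F (c • 1) := by rw [F_smul, F_one]
        rw [this]; exact F_mem _
      · intro m hm
        simp [Matrix.mul_smul, Matrix.smul_mul]
  · ext B
    constructor
    · rintro ⟨M, hM, rfl⟩
      obtain ⟨A, rfl⟩ := (ma_char M).1 hM
      exact ⟨A, (reindex_F A)⟩
    · rintro ⟨A, rfl⟩
      exact ⟨F A, F_mem A, reindex_F A⟩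
  · ext B
    constructor
    · rintro ⟨M, hM, rfl⟩
      obtain ⟨A, rfl⟩ := (mabar_char M).1 hM
      exact ⟨A, (reindex_G A)⟩
    · rintro ⟨A, rfl⟩
      exact ⟨G A, G_mem A, reindex_G A⟩
end
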